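/- Let b ≥ 2 be an integer with prime factorization b = p₁^{a₁} p₂^{a₂} ⋯ p_r^{a_r} with r ≥ 2 distinct primes, let M = max_{1≤m≤r} a_m(p_m−1), let I = {i : a_i(p_i−1) = M}, and assume |I| ≥ 2 with p₁ = max_{i∈I} p_i (and a₁(p₁−1) = M). Then for every sufficiently large positive integer n: if max_{i∈I} s_{p_i}(n) = s_{p₁}(n) then p₁^{a₁} does not divide ℓ_b(n!), and if max_{i∈I} s_{p_i}(n) > a₁(p₁−1) + s_{p₁}(n) then p₁^{a₁} divides ℓ_b(n!). -/

import Mathlib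

/-- The state reached after feeding the base-`k` digits of `n`
(most significant digit first, empty string for `n = 0`) into the
transition function `ρ` starting from state `q₀`. -/
def autoRun {Q : Type} (k : ℕ) (ρ : Q → Fin k → Q) (q₀ : Q) (n : ℕ) : Q :=
  (Nat.digits k n).reverse.foldl (fun q d => if h : d < k then ρ q ⟨d, h⟩ else q) q₀

/-- A sequence `a : ℕ → Δ` is `k`-automatic: some DFAO over the alphabet
`{0, …, k-1}` computes `a n` from the base-`k` digits of `n`
(most significant digit first). -/
def IsAutomatic {Δ : Type*} (k : ℕ) (a : ℕ → Δ) : Prop :=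
  ∃ (Q : Type) (_ : Finite Q) (ρ : Q → Fin k → Q) (q₀ : Q) (τ : Q → Δ),
    ∀ n : ℕ, a n = τ (autoRun k ρ q₀ n)

/-- `lnz b n` is the last nonzero digit of `n` in base `b`:
`(n / b ^ v_b(n)) % b`, where `v_b(n) = padicValNat b n` is the largest `t`
with `b ^ t ∣ n`. -/
def lnz (b n : ℕ) : ℕ := (n / b ^ padicValNat b n) % b

/-- `digSum b n` is the sum of the digits of `n` written in base `b`. -/
def digSum (b n : ℕ) : ℕ := (Nat.digits b n).sum

open scoped Nat

lemma auxSqLeTwoPow : ∀ m, 4 ≤ m → m * m ≤ 2 ^ m := by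
  intro m hm
  induction m with
  | zero => omega
  | succ k ih =>
    rcases Nat.lt_or_ge k 4 with h | h
    · have : k = 3 := by omega
      subst this; norm_num
    · have h1 := ih h
      have h2 : 2 ^ (k + 1) = 2 * 2 ^ k := by ring
      nlinarith

lemma auxLogLeSqrt (n : ℕ) (hn : 16 ≤ n) : Nat.log 2 n ≤ Nat.sqrt n := by
  have h4 : 4 ≤ Nat.sqrt n := Nat.le_sqrt.2 (by omega)
  have h1 : n < 2 ^ (Nat.sqrt n + 1) := by
    have h2 := Nat.lt_succ_sqrt n
    rw [Nat.succ_eq_add_one] at h2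
    have h3 : (Nat.sqrt n + 1) * (Nat.sqrt n + 1) ≤ 2 ^ (Nat.sqrt n + 1) :=
      auxSqLeTwoPow _ (by omega)
    omega
  have := Nat.log_lt_of_lt_pow (by omega) h1
  omega

lemma auxLogBound (c n : ℕ) (h16 : 16 ≤ n) (hc : 4 * c * c ≤ n) :
    c * (Nat.log 2 n + 1) ≤ n := by
  have hs := auxLogLeSqrt n h16
  have h1 : Nat.sqrt n * Nat.sqrt n ≤ n := Nat.sqrt_le n
  have h2 : 2 * c ≤ Nat.sqrt n := Nat.le_sqrt.2 (by nlinarith)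
  have h4 : 4 ≤ Nat.sqrt n := Nat.le_sqrt.2 (by omega)
  nlinarith [Nat.mul_le_mul_left c hs]

lemma auxDigSumLe (q n : ℕ) (hq : 2 ≤ q) (hn : n ≠ 0) :
    digSum q n ≤ q * (Nat.log q n + 1) := by
  have hlen : (Nat.digits q n).length = Nat.log q n + 1 := Nat.digits_len q n hq hn
  have h := List.sum_le_card_nsmul (Nat.digits q n) q
    (fun x hx => le_of_lt (Nat.digits_lt_base hq hx))
  simp only [smul_eq_mul] at h
  calc digSum q n ≤ (Nat.digits q n).length * q := h
    _ = q * (Nat.log q n + 1) := by rw [hlen]; ring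


set_option maxHeartbeats 1000000 in
/-- Let `b = ∏ i, p i ^ a i` with `r ≥ 2` distinct primes, let
`I = {i : a i * (p i - 1) = max_m a m * (p m - 1)}` and assume `|I| ≥ 2`,
with the index `0` realizing the maximum and `p 0 = max_{i ∈ I} p i`.
Then for all sufficiently large `n`: if `max_{i ∈ I} s_{p i} n = s_{p 0} n`
then `p 0 ^ a 0 ∤ ℓ_b (n !)`, and if
`max_{i ∈ I} s_{p i} n > a 0 * (p 0 - 1) + s_{p 0} n` then
`p 0 ^ a 0 ∣ ℓ_b (n !)`. -/
theorem lnz_factorial_divisibility_dichotomy (b r : ℕ) (hb : 2 ≤ b) (hr : 2 ≤ r)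
    (p a : Fin r → ℕ) (hp : ∀ i, (p i).Prime) (hpinj : Function.Injective p)
    (ha : ∀ i, 0 < a i) (hfac : b = ∏ i, p i ^ a i)
    (hM : ∀ m : Fin r, a m * (p m - 1) ≤ a ⟨0, by omega⟩ * (p ⟨0, by omega⟩ - 1))
    (I : Finset (Fin r))
    (hI : I = Finset.univ.filter
      (fun i => a i * (p i - 1) = a ⟨0, by omega⟩ * (p ⟨0, by omega⟩ - 1)))
    (hIcard : 2 ≤ I.card)
    (hpmax : ∀ i ∈ I, p i ≤ p ⟨0, by omega⟩) :
    ∃ N : ℕ, ∀ n : ℕ, N ≤ n → 0 < n →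
      (I.sup (fun i => digSum (p i) n) = digSum (p ⟨0, by omega⟩) n →
        ¬ p ⟨0, by omega⟩ ^ a ⟨0, by omega⟩ ∣ lnz b (Nat.factorial n)) ∧
      (a ⟨0, by omega⟩ * (p ⟨0, by omega⟩ - 1) + digSum (p ⟨0, by omega⟩) n <
          I.sup (fun i => digSum (p i) n) →
        p ⟨0, by omega⟩ ^ a ⟨0, by omega⟩ ∣ lnz b (Nat.factorial n)) := by
  have hr0 : 0 < r := by omega
  set i0 : Fin r := ⟨0, by omega⟩ with hi0def
  have hp0 : (p i0).Prime := hp i0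
  have hbpos : 0 < b := by omega
  have hpi2 : ∀ i, 2 ≤ p i := fun i => (hp i).two_le
  set M : ℕ := a i0 * (p i0 - 1) with hMdef
  have hMpos : 0 < M := Nat.mul_pos (ha i0) (by have := hpi2 i0; omega)
  have hmemI : ∀ i, i ∈ I ↔ a i * (p i - 1) = M := by
    intro i; rw [hI, Finset.mem_filter]
    exact ⟨fun h => h.2, fun h => ⟨Finset.mem_univ i, h⟩⟩
  have hi0I : i0 ∈ I := (hmemI i0).2 rfl
  have hM2 : 2 ≤ M := by
    by_contra hcon
    obtain ⟨i, hiI, j, hjI, hij⟩ := Finset.one_lt_card.1 (by omega : 1 < I.card)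
    have hi := (hmemI i).1 hiI
    have hj := (hmemI j).1 hjI
    have h2i := hpi2 i; have h2j := hpi2 j
    have hM1 : M = 1 := by omega
    rw [hM1] at hi hj
    have hi1 : a i = 1 := Nat.eq_one_of_mul_eq_one_right hi
    have hj1 : a j = 1 := Nat.eq_one_of_mul_eq_one_right hj
    rw [hi1, one_mul] at hi
    rw [hj1, one_mul] at hj
    exact hij (hpinj (by omega))
  have hpib : ∀ i, p i ≤ b := by
    intro i
    refine Nat.le_of_dvd hbpos ?_
    rw [hfac]
    exact dvd_trans (dvd_pow_self (p i) (ha i).ne') (Finset.dvd_prod_of_mem _ (Finset.mem_univ i))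
  -- factorization of b
  have hbfact : b.factorization = ∑ i, Finsupp.single (p i) (a i) := by
    rw [hfac, Nat.factorization_prod (fun i _ => pow_ne_zero _ (hp i).pos.ne')]
    exact Finset.sum_congr rfl (fun i _ => (hp i).factorization_pow)
  have hbfact_at : ∀ j, b.factorization (p j) = a j := by
    intro j
    rw [hbfact, Finsupp.finset_sum_apply]
    rw [Finset.sum_eq_single j]
    · rw [Finsupp.single_apply, if_pos rfl]
    · intro i _ hij
      rw [Finsupp.single_apply, if_neg (fun hc => hij (hpinj hc))]
    · intro h; exact absurd (Finset.mem_univ j) h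
  refine ⟨max 16 (max (4 * (2 * M * b) * (2 * M * b)) (2 * M)), fun n hn hn0 => ?_⟩
  have h16 : 16 ≤ n := le_trans (le_max_left _ _) hn
  have h2M : 2 * M ≤ n := le_trans (le_trans (le_max_right _ _) (le_max_right _ _)) hn
  have hdig : ∀ i, 2 * M * digSum (p i) n ≤ n := by
    intro i
    have h1 : digSum (p i) n ≤ p i * (Nat.log (p i) n + 1) :=
      auxDigSumLe _ _ (hpi2 i) hn0.ne'
    have h2 : Nat.log (p i) n ≤ Nat.log 2 n := Nat.log_anti_left (by norm_num) (hpi2 i)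
    have h3 : (2 * M * b) * (Nat.log 2 n + 1) ≤ n :=
      auxLogBound _ _ h16 (le_trans (le_trans (le_max_left _ _) (le_max_right _ _)) hn)
    have h4 := hpib i
    have hA : p i * (Nat.log (p i) n + 1) ≤ b * (Nat.log 2 n + 1) :=
      Nat.mul_le_mul h4 (by omega)
    calc 2 * M * digSum (p i) n ≤ 2 * M * (b * (Nat.log 2 n + 1)) :=
          Nat.mul_le_mul_left _ (le_trans h1 hA)
      _ = 2 * M * b * (Nat.log 2 n + 1) := by ring
      _ ≤ n := h3
  have hnfac : n ! ≠ 0 := Nat.factorial_ne_zero n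
  -- Legendre
  have hLeg : ∀ i, padicValNat (p i) (n !) / a i
      = (n - digSum (p i) n) / ((p i - 1) * a i) := by
    intro i
    haveI : Fact (p i).Prime := ⟨hp i⟩
    have hleg := sub_one_mul_padicValNat_factorial (p := p i) n
    have hv : padicValNat (p i) (n !) = (n - digSum (p i) n) / (p i - 1) := by
      have h2 := hpi2 i
      show padicValNat (p i) (n !) = (n - (Nat.digits (p i) n).sum) / (p i - 1)
      rw [← hleg, Nat.mul_div_cancel_left _ (by omega : 0 < p i - 1)]
    rw [hv, Nat.div_div_eq_div_mul]
  set v : Fin r → ℕ := fun i => padicValNat (p i) (n !) / a i with hvdef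
  have hne : (Finset.univ : Finset (Fin r)).Nonempty := ⟨i0, Finset.mem_univ i0⟩
  set V := Finset.univ.inf' hne v with hVdef
  have hVle : ∀ i, V ≤ v i := fun i => Finset.inf'_le v (Finset.mem_univ i)
  obtain ⟨imin, -, hvmin⟩ := Finset.exists_mem_eq_inf' hne v
  -- divisibility criterion for powers of b
  have hdvd_iff : ∀ t, b ^ t ∣ n ! ↔ ∀ i, t * a i ≤ padicValNat (p i) (n !) := by
    intro t
    rw [← Nat.factorization_le_iff_dvd (pow_ne_zero t hbpos.ne') hnfac,
      Nat.factorization_pow, Finsupp.le_def]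
    constructor
    · intro h i
      have := h (p i)
      rwa [Finsupp.smul_apply, hbfact_at i, smul_eq_mul,
        Nat.factorization_def _ (hp i)] at this
    · intro h q
      rw [Finsupp.smul_apply, smul_eq_mul]
      by_cases hq : ∃ i, p i = q
      · obtain ⟨i, rfl⟩ := hq
        rw [hbfact_at i, Nat.factorization_def _ (hp i)]
        exact h i
      · have hz : b.factorization q = 0 := by
          rw [hbfact, Finsupp.finset_sum_apply]
          refine Finset.sum_eq_zero (fun i _ => ?_)
          rw [Finsupp.single_apply, if_neg (fun hc => hq ⟨i, hc⟩)]
        rw [hz, Nat.mul_zero]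
        exact Nat.zero_le _
  have hbV : b ^ V ∣ n ! := by
    rw [hdvd_iff]
    intro i
    calc V * a i ≤ v i * a i := Nat.mul_le_mul_right _ (hVle i)
      _ ≤ padicValNat (p i) (n !) := Nat.div_mul_le_self _ _
  have hvb : padicValNat b (n !) = V := by
    rw [padicValNat_def' (by omega : b ≠ 1) hnfac]
    apply multiplicity_eq_of_dvd_of_not_dvd hbV
    rw [hdvd_iff]
    push_neg
    refine ⟨imin, ?_⟩
    have hlt : padicValNat (p imin) (n !) / a imin
        < padicValNat (p imin) (n !) / a imin + 1 := Nat.lt_succ_self _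
    have := (Nat.div_lt_iff_lt_mul (ha imin)).1 hlt
    calc padicValNat (p imin) (n !)
        < (padicValNat (p imin) (n !) / a imin + 1) * a imin := this
      _ = (V + 1) * a imin := by rw [hVdef, hvmin]
  -- criterion
  have hcrit : p i0 ^ a i0 ∣ lnz b (n !) ↔ V + 1 ≤ v i0 := by
    have hpb : p i0 ^ a i0 ∣ b := by
      rw [hfac]; exact Finset.dvd_prod_of_mem _ (Finset.mem_univ i0)
    unfold lnz
    rw [hvb, Nat.dvd_mod_iff hpb]
    obtain ⟨c, hc⟩ := hbV
    have hcne : c ≠ 0 := by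
      intro h; rw [h, Nat.mul_zero] at hc; exact hnfac hc
    rw [hc, Nat.mul_div_cancel_left _ (Nat.pow_pos (n := V) hbpos)]
    rw [hp0.pow_dvd_iff_le_factorization hcne]
    have hfc : (n !).factorization (p i0) = V * a i0 + c.factorization (p i0) := by
      rw [hc, Nat.factorization_mul (pow_ne_zero _ hbpos.ne') hcne]
      simp only [Finsupp.coe_add, Pi.add_apply, Nat.factorization_pow, Finsupp.smul_apply,
        smul_eq_mul, hbfact_at i0]
    have hfd : (n !).factorization (p i0) = padicValNat (p i0) (n !) :=
      Nat.factorization_def _ hp0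
    have hdm := Nat.div_add_mod (padicValNat (p i0) (n !)) (a i0)
    have hmod : padicValNat (p i0) (n !) % a i0 < a i0 := Nat.mod_lt _ (ha i0)
    have hvv : v i0 = padicValNat (p i0) (n !) / a i0 := by simp only [hvdef]
    rw [hvv, Nat.le_div_iff_mul_le (ha i0)]
    have hexp : (V + 1) * a i0 = V * a i0 + a i0 := by ring
    omega
  have hdigle : ∀ i, digSum (p i) n ≤ n / (2 * M) := by
    intro i
    rw [Nat.le_div_iff_mul_le (by omega : 0 < 2 * M)]
    have := hdig i
    nlinarith
  constructor
  · -- case 1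
    intro hsup
    rw [hcrit]
    have hvV : v i0 ≤ V := by
      apply Finset.le_inf'
      intro i _
      simp only [hvdef]
      rw [hLeg i, hLeg i0]
      have hMc : (p i0 - 1) * a i0 = M := by rw [hMdef]; ring
      rw [hMc]
      by_cases hiI : i ∈ I
      · have hMci : (p i - 1) * a i = M := by
          rw [← (hmemI i).1 hiI]; ring
        rw [hMci]
        apply Nat.div_le_div_right
        have hsle : digSum (p i) n ≤ digSum (p i0) n := by
          rw [← hsup]
          exact Finset.le_sup (f := fun i => digSum (p i) n) hiI
        omega
      · -- denominator at most M - 1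
        have hden : (p i - 1) * a i ≤ M - 1 := by
          have h1 := hM i
          have h2 := (hmemI i).not.1 hiI
          rw [hMdef] at *
          have : (p i - 1) * a i = a i * (p i - 1) := by ring
          omega
        have hdenpos : 0 < (p i - 1) * a i :=
          Nat.mul_pos (by have := hpi2 i; omega) (ha i)
        calc (n - digSum (p i0) n) / M ≤ (n - digSum (p i) n) / (M - 1) := by
              rw [Nat.le_div_iff_mul_le (by omega : 0 < M - 1)]
              have hA : (n - digSum (p i0) n) / M ≤ n / M := Nat.div_le_div_right (by omega)
              have hAM : n / M * M ≤ n := Nat.div_mul_le_self _ _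
              have hsi : digSum (p i) n ≤ n / M :=
                le_trans (hdigle i) (Nat.div_le_div_left (by omega) hMpos)
              have hmono : (n - digSum (p i0) n) / M * (M - 1) ≤ n / M * (M - 1) :=
                Nat.mul_le_mul_right _ hA
              have hexp : n / M * (M - 1) + n / M = n / M * M := by
                rw [← Nat.mul_succ]; congr 1; omega
              omega
          _ ≤ (n - digSum (p i) n) / ((p i - 1) * a i) :=
              Nat.div_le_div_left hden hdenpos
    omega
  · -- case 2
    intro hlt
    rw [hcrit]
    have hIne : I.Nonempty := Finset.card_pos.1 (by omega)
    obtain ⟨j, hjI, hjs⟩ := Finset.exists_mem_eq_sup I hIne (fun i => digSum (p i) n)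
    rw [hjs] at hlt
    have hMcj : (p j - 1) * a j = M := by rw [← (hmemI j).1 hjI]; ring
    have hMc0 : (p i0 - 1) * a i0 = M := by rw [hMdef]; ring
    have hVj : V ≤ (n - digSum (p j) n) / M := by
      rw [← hMcj, ← hLeg j]
      exact hVle j
    have hsj : digSum (p j) n ≤ n / 2 := by
      rw [Nat.le_div_iff_mul_le (by norm_num : (0:ℕ) < 2)]
      have := hdig j
      nlinarith
    have hs0 : digSum (p i0) n ≤ n / 2 := by
      rw [Nat.le_div_iff_mul_le (by norm_num : (0:ℕ) < 2)]
      have := hdig i0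
      nlinarith
    have hn2 : n / 2 ≤ n := Nat.div_le_self _ _
    have hhalf : 2 * (n / 2) + 1 ≥ n := by omega
    have hMle : M + digSum (p i0) n ≤ n := by
      have : M ≤ n / 2 := by
        rw [Nat.le_div_iff_mul_le (by norm_num : (0:ℕ) < 2)]; omega
      omega
    have hvi0 : v i0 = (n - digSum (p i0) n) / M := by
      simp only [hvdef]; rw [hLeg i0, hMc0]
    -- key: (n - s_j)/M + 1 ≤ (n - s_0)/M
    have hkey : (n - digSum (p j) n) / M + 1 ≤ (n - digSum (p i0) n) / M := by
      set x := n - digSum (p i0) n with hxdef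
      have hxM : M ≤ x := by omega
      have h1 : n - digSum (p j) n ≤ x - M := by omega
      have h2 : (n - digSum (p j) n) / M ≤ (x - M) / M := Nat.div_le_div_right h1
      have h3 : (x - M) / M + 1 ≤ x / M := by
        rw [Nat.le_div_iff_mul_le hMpos, Nat.add_mul, Nat.one_mul]
        have := Nat.div_mul_le_self (x - M) M
        omega
      omega
    rw [hvi0]
    omega
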